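/- Let (X_1,Y_1),...,(X_n,Y_n),(X_{n+1},Y_{n+1}) be i.i.d., let s be a score function, set s_i = s(X_i,Y_i), and let q̂ be the ⌈(n+1)(1-α)⌉/n empirical quantile of s_1,...,s_n (i.e., the k-th smallest with k = ⌈(n+1)(1-α)⌉, assuming ⌈(n+1)(1-α)⌉ ≤ n). Then P(s(X_{n+1},Y_{n+1}) ≤ q̂) ≥ 1-α, hence P(Y_{n+1} ∈ C(X_{n+1})) ≥ 1-α where C(x) = {y : s(x,y) ≤ q̂}. -/

import Mathlib

open MeasureTheory ProbabilityTheory Real Set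

noncomputable def kthSmallest {n : ℕ} (v : Fin n → ℝ) (k : ℕ) : ℝ :=
  ((List.ofFn v : Multiset ℝ).sort (· ≤ ·)).getD (k-1) 0


lemma sorted_le_get_iff (l : List ℝ) (hl : l.Pairwise (·≤·)) (k : ℕ) (hk : 1 ≤ k)
    (h : k - 1 < l.length) (x : ℝ) :
    x ≤ l.getD (k-1) 0 ↔ l.countP (fun y => decide (y < x)) < k := by
  rw [List.getD_eq_getElem l 0 h]
  constructor
  · intro hx
    by_contra hc
    push_neg at hc
    have hdrop : (l.drop (k-1)).countP (fun y => decide (y < x)) = 0 := by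
      rw [List.countP_eq_zero]
      intro a ha
      rw [List.mem_iff_getElem] at ha
      obtain ⟨i, hi, rfl⟩ := ha
      have hlen' : k - 1 + i < l.length := by rw [List.length_drop] at hi; omega
      rw [List.getElem_drop]
      simp only [decide_eq_true_eq, not_lt]
      calc x ≤ l[k-1] := hx
        _ ≤ l[k-1+i] := by
          have := hl.rel_get_of_le (a := ⟨k-1, h⟩) (b := ⟨k-1+i, hlen'⟩)
            (by simp [Fin.le_def])
          simpa using this
    have hsplit := List.take_append_drop (k-1) l
    have hcnt : l.countP (fun y => decide (y < x)) =
        (l.take (k-1)).countP (fun y => decide (y < x)) := by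
      conv_lhs => rw [← hsplit]
      rw [List.countP_append, hdrop]; omega
    have hle : (l.take (k-1)).countP (fun y => decide (y < x)) ≤ k - 1 := by
      calc _ ≤ (l.take (k-1)).length := List.countP_le_length
        _ ≤ k - 1 := by rw [List.length_take]; omega
    omega
  · intro hc
    by_contra hx
    push_neg at hx
    have htake : (l.take k).countP (fun y => decide (y < x)) = (l.take k).length := by
      rw [List.countP_eq_length]
      intro a ha
      rw [List.mem_iff_getElem] at ha
      obtain ⟨i, hi, rfl⟩ := ha
      have hik : i < k := by rw [List.length_take] at hi; omega
      have hilen : i < l.length := by rw [List.length_take] at hi; omega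
      rw [List.getElem_take]
      simp only [decide_eq_true_eq]
      calc l[i] ≤ l[k-1] := by
            have := hl.rel_get_of_le (a := ⟨i, hilen⟩) (b := ⟨k-1, h⟩)
              (by simp [Fin.le_def]; omega)
            simpa using this
        _ < x := hx
    have hlen : (l.take k).length = k := by rw [List.length_take]; omega
    have : k ≤ l.countP (fun y => decide (y < x)) := by
      calc k = (l.take k).countP (fun y => decide (y < x)) := by rw [htake, hlen]
        _ ≤ _ := (List.take_sublist k l).countP_le
    omega

lemma sorted_count_le_get (l : List ℝ) (hl : l.Pairwise (·≤·)) (k : ℕ) (hk : 1 ≤ k)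
    (h : k - 1 < l.length) :
    k ≤ l.countP (fun y => decide (y ≤ l.getD (k-1) 0)) := by
  rw [List.getD_eq_getElem l 0 h]
  have htake : (l.take k).countP (fun y => decide (y ≤ l[k-1])) = (l.take k).length := by
    rw [List.countP_eq_length]
    intro a ha
    rw [List.mem_iff_getElem] at ha
    obtain ⟨i, hi, rfl⟩ := ha
    have hik : i < k := by rw [List.length_take] at hi; omega
    have hilen : i < l.length := by rw [List.length_take] at hi; omega
    rw [List.getElem_take]
    simp only [decide_eq_true_eq]
    have := hl.rel_get_of_le (a := ⟨i, hilen⟩) (b := ⟨k-1, h⟩)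
      (by simp [Fin.le_def]; omega)
    simpa using this
  have hlen : (l.take k).length = k := by rw [List.length_take]; omega
  calc k = (l.take k).countP (fun y => decide (y ≤ l[k-1])) := by rw [htake, hlen]
    _ ≤ _ := (List.take_sublist k l).countP_le

lemma card_filter_univ {n : ℕ} (q : Fin n → Prop) [DecidablePred q] :
    (Finset.univ.filter q).card = (List.finRange n).countP (fun i => decide (q i)) := by
  have h1 : (Finset.univ.filter q).card = Multiset.countP q (Finset.univ : Finset (Fin n)).val := by
    rw [Multiset.countP_eq_card_filter]; rfl
  rw [h1]
  have h2 : (Finset.univ : Finset (Fin n)).val = ↑(List.finRange n) := rfl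
  rw [h2, Multiset.coe_countP]

lemma countP_sort {n : ℕ} (v : Fin n → ℝ) (p : ℝ → Prop) [DecidablePred p] :
    ((List.ofFn v : Multiset ℝ).sort (· ≤ ·)).countP (fun y => decide (p y)) =
    (Finset.univ.filter fun i => p (v i)).card := by
  have hperm : ((List.ofFn v : Multiset ℝ).sort (· ≤ ·)).Perm (List.ofFn v) := by
    rw [← Multiset.coe_eq_coe, Multiset.sort_eq]
  rw [hperm.countP_eq, List.ofFn_eq_map, List.countP_map, card_filter_univ]
  rfl

lemma length_sort_ofFn {n : ℕ} (v : Fin n → ℝ) :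
    ((List.ofFn v : Multiset ℝ).sort (· ≤ ·)).length = n := by
  rw [Multiset.length_sort]
  simp

lemma kth_le_iff {n k : ℕ} (v : Fin n → ℝ) (hk : 1 ≤ k) (hkn : k ≤ n) (x : ℝ) :
    x ≤ kthSmallest v k ↔ (Finset.univ.filter fun i => v i < x).card < k := by
  have hlen : k - 1 < ((List.ofFn v : Multiset ℝ).sort (· ≤ ·)).length := by
    rw [length_sort_ofFn]; omega
  rw [kthSmallest,
    sorted_le_get_iff _ (Multiset.pairwise_sort _ _) k hk hlen x,
    countP_sort v (fun y => y < x)]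

lemma kth_count_le {n k : ℕ} (v : Fin n → ℝ) (hk : 1 ≤ k) (hkn : k ≤ n) :
    k ≤ (Finset.univ.filter fun i => v i ≤ kthSmallest v k).card := by
  have hlen : k - 1 < ((List.ofFn v : Multiset ℝ).sort (· ≤ ·)).length := by
    rw [length_sort_ofFn]; omega
  have h2 := sorted_count_le_get _ (Multiset.pairwise_sort (α := ℝ) (List.ofFn v) (· ≤ ·)) k hk hlen
  have h3 : k ≤ ((List.ofFn v : Multiset ℝ).sort (· ≤ ·)).countP
      (fun y => decide (y ≤ kthSmallest v k)) := h2
  rw [countP_sort v (fun y => y ≤ kthSmallest v k)] at h3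
  exact h3


lemma key_count {m k : ℕ} (v : Fin m → ℝ) (hk : 1 ≤ k) (hkm : k ≤ m) :
    k ≤ (Finset.univ.filter fun j =>
        (Finset.univ.filter fun i => v i < v j).card < k).card := by
  have hsub : (Finset.univ.filter fun j => v j ≤ kthSmallest v k) ⊆
      (Finset.univ.filter fun j => (Finset.univ.filter fun i => v i < v j).card < k) := by
    intro j hj
    simp only [Finset.mem_filter, Finset.mem_univ, true_and] at *
    have h1 : (Finset.univ.filter fun i => v i < v j).card ≤
        (Finset.univ.filter fun i => v i < kthSmallest v k).card := by
      apply Finset.card_le_card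
      intro i hi
      simp only [Finset.mem_filter, Finset.mem_univ, true_and] at *
      exact lt_of_lt_of_le hi hj
    have h2 : (Finset.univ.filter fun i => v i < kthSmallest v k).card < k :=
      (kth_le_iff v hk hkm (kthSmallest v k)).1 le_rfl
    omega
  calc k ≤ (Finset.univ.filter fun j => v j ≤ kthSmallest v k).card := kth_count_le v hk hkm
    _ ≤ _ := Finset.card_le_card hsub

lemma card_filter_comp_equiv {m : ℕ} (e : Fin m ≃ Fin m) (p : Fin m → Prop) [DecidablePred p] :
    (Finset.univ.filter fun i => p (e i)).card = (Finset.univ.filter p).card := by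
  apply Finset.card_bij (fun i _ => e i)
  · intro a ha; simp only [Finset.mem_filter] at *; exact ⟨Finset.mem_univ _, ha.2⟩
  · intro a _ b _ h; exact e.injective h
  · intro b hb
    refine ⟨e.symm b, ?_, by simp⟩
    simp only [Finset.mem_filter, Finset.mem_univ, true_and] at *
    simpa using hb

lemma joint_eq_pi {Ω : Type*} [MeasurableSpace Ω] (P : Measure Ω) [IsProbabilityMeasure P]
    {m : ℕ} (T : Fin m → Ω → ℝ) (hT : ∀ i, Measurable (T i)) (ν : Measure ℝ) [SigmaFinite ν]
    (H : ∀ t : Fin m → Set ℝ, (∀ i, MeasurableSet (t i)) →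
      P (⋂ i, T i ⁻¹' t i) = ∏ i, ν (t i)) :
    P.map (fun ω i => T i ω) = Measure.pi (fun _ => ν) := by
  have hJ : Measurable (fun ω (i : Fin m) => T i ω) :=
    measurable_pi_iff.2 fun i => hT i
  refine (Measure.pi_eq fun t ht => ?_).symm
  rw [Measure.map_apply hJ (MeasurableSet.univ_pi ht)]
  rw [show (fun ω (i : Fin m) => T i ω) ⁻¹' (Set.univ.pi t) = ⋂ i, T i ⁻¹' t i by
    ext ω; simp [Set.mem_pi]]
  exact H t ht

lemma count_le_sum_measure {Ω : Type*} [MeasurableSpace Ω] (P : Measure Ω)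
    [IsProbabilityMeasure P] {m k : ℕ} (A : Fin m → Set Ω) (hA : ∀ j, MeasurableSet (A j))
    (hcount : ∀ ω, (k : ENNReal) ≤ ∑ j, (A j).indicator 1 ω) :
    (k : ENNReal) ≤ ∑ j, P (A j) := by
  have step : (k : ENNReal) ≤ ∫⁻ ω, ∑ j, (A j).indicator 1 ω ∂P := by
    calc (k : ENNReal) = (k : ENNReal) * P Set.univ := by simp
      _ = ∫⁻ _, (k : ENNReal) ∂P := (lintegral_const _).symm
      _ ≤ _ := lintegral_mono hcount
  calc (k : ENNReal) ≤ _ := step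
    _ = ∑ j, ∫⁻ ω, (A j).indicator 1 ω ∂P :=
        lintegral_finset_sum _ fun j _ => measurable_one.indicator (hA j)
    _ = ∑ j, P (A j) := by
        apply Finset.sum_congr rfl
        intro j _
        exact lintegral_indicator_one (hA j)

/-- Split conformal coverage guarantee for i.i.d. data. -/
theorem stmt_0 {Ω 𝒳 𝒴 : Type*} [MeasurableSpace Ω] [MeasurableSpace 𝒳] [MeasurableSpace 𝒴]
    (P : Measure Ω) [IsProbabilityMeasure P] (n : ℕ) (Z : Fin (n+1) → Ω → 𝒳 × 𝒴)
    (hmeas : ∀ i, Measurable (Z i))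
    (hindep : iIndepFun Z P)
    (hident : ∀ i, Measure.map (Z i) P = Measure.map (Z 0) P)
    (s : 𝒳 × 𝒴 → ℝ) (hs : Measurable s)
    (α : ℝ) (hα : α ∈ Set.Ioo (0:ℝ) 1)
    (k : ℕ) (hk : (k : ℤ) = ⌈((n:ℝ)+1)*(1-α)⌉) (hkn : k ≤ n)
    (qhat : Ω → ℝ)
    (hq : ∀ ω, qhat ω = kthSmallest (fun i : Fin n => s (Z i.castSucc ω)) k) :
    P {ω | s (Z (Fin.last n) ω) ≤ qhat ω} ≥ ENNReal.ofReal (1 - α) := by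
  have hα0 : 0 < α := hα.1
  have hα1 : α < 1 := hα.2
  have hkpos : 1 ≤ k := by
    have h1 : (0 : ℝ) < ((n:ℝ)+1)*(1-α) := by
      have : (0:ℝ) < 1 - α := by linarith
      have : (0:ℝ) < (n:ℝ)+1 := by positivity
      nlinarith
    have h2 : (0 : ℤ) < ⌈((n:ℝ)+1)*(1-α)⌉ := Int.ceil_pos.2 h1
    omega
  set S : Fin (n+1) → Ω → ℝ := fun i ω => s (Z i ω) with hS
  have hSmeas : ∀ i, Measurable (S i) := fun i => hs.comp (hmeas i)
  have hSindep : iIndepFun S P :=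
    hindep.comp (fun _ => s) (fun _ => hs)
  set ν : Measure ℝ := P.map (S 0) with hν
  have hνprob : IsProbabilityMeasure ν := Measure.isProbabilityMeasure_map (hSmeas 0).aemeasurable
  have hSident : ∀ i, P.map (S i) = ν := by
    intro i
    rw [hν, hS]
    show P.map (s ∘ Z i) = P.map (s ∘ Z 0)
    rw [← Measure.map_map hs (hmeas i), ← Measure.map_map hs (hmeas 0), hident i]
  -- box probabilities for the original family
  have Hbox : ∀ t : Fin (n+1) → Set ℝ, (∀ i, MeasurableSet (t i)) →
      P (⋂ i, S i ⁻¹' t i) = ∏ i, ν (t i) := by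
    intro t ht
    have h1 := hSindep.measure_inter_preimage_eq_mul Finset.univ (sets := t)
      (fun i _ => ht i)
    have h2 : (⋂ i, S i ⁻¹' t i) = ⋂ i ∈ Finset.univ, S i ⁻¹' t i := by simp
    rw [h2, h1]
    apply Finset.prod_congr rfl
    intro i _
    rw [← hSident i, Measure.map_apply (hSmeas i) (ht i)]
  -- joint law
  set J : Ω → (Fin (n+1) → ℝ) := fun ω i => S i ω with hJdef
  have hJmeas : Measurable J := measurable_pi_iff.2 fun i => hSmeas i
  have hJpi : P.map J = Measure.pi (fun _ => ν) := joint_eq_pi P S hSmeas ν Hbox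
  -- permuted joint laws
  have hperm : ∀ e : Fin (n+1) ≃ Fin (n+1),
      P.map (fun ω i => S (e i) ω) = Measure.pi (fun _ => ν) := by
    intro e
    apply joint_eq_pi P (fun i => S (e i)) (fun i => hSmeas (e i)) ν
    intro t ht
    have h1 : (⋂ i, S (e i) ⁻¹' t i) = ⋂ j, S j ⁻¹' t (e.symm j) := by
      have := e.surjective.iInter_comp (fun j => S j ⁻¹' t (e.symm j))
      simpa using this
    rw [h1, Hbox (fun j => t (e.symm j)) (fun j => ht _)]
    exact e.symm.prod_comp (fun i => ν (t i))
  -- the count function and events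
  set c : (Fin (n+1) → ℝ) → Fin (n+1) → ℕ :=
    fun v j => (Finset.univ.filter fun i => v i < v j).card with hc
  have hcmeas : ∀ j, Measurable (fun v => c v j) := by
    intro j
    have : (fun v : Fin (n+1) → ℝ => c v j) =
        fun v => ∑ i, if v i < v j then 1 else 0 := by
      funext v
      rw [hc]
      exact Finset.card_filter _ _
    rw [this]
    apply Finset.measurable_sum
    intro i _
    exact Measurable.ite (measurableSet_lt (measurable_pi_apply i) (measurable_pi_apply j))
      measurable_const measurable_const
  set B : Fin (n+1) → Set (Fin (n+1) → ℝ) := fun j => {v | c v j < k} with hB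
  have hBmeas : ∀ j, MeasurableSet (B j) := by
    intro j
    have : B j = (fun v => c v j) ⁻¹' {x | x < k} := rfl
    rw [this]
    exact (hcmeas j) (by trivial)
  set A : Fin (n+1) → Set Ω := fun j => J ⁻¹' (B j) with hA
  have hAmeas : ∀ j, MeasurableSet (A j) := fun j => hJmeas (hBmeas j)
  -- all events have the same probability
  have hsame : ∀ j, P (A j) = P (A (Fin.last n)) := by
    intro j
    set e : Fin (n+1) ≃ Fin (n+1) := Equiv.swap j (Fin.last n) with he
    have hKmeas : Measurable (fun ω i => S (e i) ω) :=
      measurable_pi_iff.2 fun i => hSmeas (e i)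
    have hmaps : P ((fun ω i => S (e i) ω) ⁻¹' (B (Fin.last n))) = P (A (Fin.last n)) := by
      rw [← Measure.map_apply hKmeas (hBmeas _), hperm e, ← hJpi,
        Measure.map_apply hJmeas (hBmeas _)]
    have hj : e (Fin.last n) = j := Equiv.swap_apply_right _ _
    have hcard_e : ∀ ω, (Finset.univ.filter fun i => S (e i) ω < S (e (Fin.last n)) ω).card
        = c (J ω) j := by
      intro ω
      rw [hj]
      exact card_filter_comp_equiv e (fun i' => J ω i' < J ω j)
    have hset : (fun ω i => S (e i) ω) ⁻¹' (B (Fin.last n)) = A j := by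
      ext ω
      simp only [Set.mem_preimage, hA, hB, Set.mem_setOf_eq]
      have h1 : c (fun i => S (e i) ω) (Fin.last n)
          = (Finset.univ.filter fun i => S (e i) ω < S (e (Fin.last n)) ω).card := rfl
      rw [h1, hcard_e ω]
    rw [← hset, hmaps]
  -- pointwise count lower bound
  have hcount : ∀ ω, (k : ENNReal) ≤ ∑ j, (A j).indicator 1 ω := by
    intro ω
    have hkc := key_count (J ω) hkpos (by omega)
    have heq : ∑ j, (A j).indicator (1 : Ω → ENNReal) ω =
        ((Finset.univ.filter fun j =>
          (Finset.univ.filter fun i => J ω i < J ω j).card < k).card : ENNReal) := by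
      rw [Finset.card_filter]
      push_cast
      apply Finset.sum_congr rfl
      intro j _
      by_cases h : ω ∈ A j
      · have h' : (Finset.univ.filter fun i => J ω i < J ω j).card < k := h
        simp [Set.indicator_of_mem h, h']
      · have h' : ¬ (Finset.univ.filter fun i => J ω i < J ω j).card < k := h
        simp [Set.indicator_of_notMem h, h']
    rw [heq]
    exact_mod_cast hkc
  have hsum : (k : ENNReal) ≤ ∑ j, P (A j) := count_le_sum_measure P A hAmeas hcount
  have hsum2 : ∑ j, P (A j) = ((n:ENNReal)+1) * P (A (Fin.last n)) := by
    rw [Finset.sum_congr rfl (fun j _ => hsame j), Finset.sum_const, Finset.card_univ]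
    simp [nsmul_eq_mul]
  -- identify the goal event with A (last n)
  have hevent : {ω | s (Z (Fin.last n) ω) ≤ qhat ω} = A (Fin.last n) := by
    ext ω
    simp only [Set.mem_setOf_eq, hA, hB, Set.mem_preimage, Set.mem_setOf_eq]
    rw [hq ω]
    have hiff := kth_le_iff (fun i : Fin n => s (Z i.castSucc ω)) hkpos hkn
      (s (Z (Fin.last n) ω))
    rw [hiff]
    have hcards : (Finset.univ.filter fun i : Fin (n+1) => J ω i < J ω (Fin.last n)).card =
        (Finset.univ.filter fun i : Fin n =>
          s (Z i.castSucc ω) < s (Z (Fin.last n) ω)).card := by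
      rw [Fin.univ_castSuccEmb, Finset.filter_cons]
      rw [if_neg (by simp)]
      rw [Finset.filter_map, Finset.card_map]
      rfl
    have h2 : c (J ω) (Fin.last n) =
        (Finset.univ.filter fun i : Fin (n+1) => J ω i < J ω (Fin.last n)).card := rfl
    rw [h2, hcards]
  rw [hevent]
  -- final arithmetic
  have hkreal : ((n:ℝ)+1)*(1-α) ≤ (k:ℝ) := by
    have := Int.le_ceil (((n:ℝ)+1)*(1-α))
    rw [← hk] at this
    exact_mod_cast this
  have h1 : ((n:ENNReal)+1) * ENNReal.ofReal (1-α) ≤ ((n:ENNReal)+1) * P (A (Fin.last n)) := by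
    calc ((n:ENNReal)+1) * ENNReal.ofReal (1-α)
        = ENNReal.ofReal (((n:ℝ)+1)*(1-α)) := by
          rw [ENNReal.ofReal_mul (by positivity)]
          congr 1
          rw [ENNReal.ofReal_add (by positivity) zero_le_one]
          simp [ENNReal.ofReal_natCast]
      _ ≤ (k : ENNReal) := by
          rw [← ENNReal.ofReal_natCast k]
          exact ENNReal.ofReal_le_ofReal hkreal
      _ ≤ ∑ j, P (A j) := hsum
      _ = _ := hsum2
  have hne : ((n:ENNReal)+1) ≠ 0 := by simp
  have hnetop : ((n:ENNReal)+1) ≠ ⊤ := by simp [ENNReal.add_ne_top]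
  exact (ENNReal.mul_le_mul_iff_right hne hnetop).1 h1
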